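/- Let q ∈ ℂ with q ≠ 0 and qⁿ ≠ 1 for all n ≥ 1, and let ψₙ = (qⁿ − 1)/(q − 1). Then for all i > j ≥ 0 the Fontané product satisfies (a ∗_{i,j} b)ₙ = q^j Σ_{k=0}^{n} q^k binomψ(n,k) aₖ b_{n−k} for all coefficient sequences a, b (i.e., a ∗_{i,j} b corresponds to q^j f(qx)g(x), independently of i), and the operation ∗_{i,j} is neither commutative nor associative: there exist coefficient sequences a, b, c with a ∗_{i,j} b ≠ b ∗_{i,j} a and (a ∗_{i,j} b) ∗_{i,j} c ≠ a ∗_{i,j} (b ∗_{i,j} c). -/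

import Mathlib

open Finset

/-- The ψ-factorial: ψₙ! = ψ₁ψ₂⋯ψₙ, with ψ₀! = 1. -/
noncomputable def psiFact (ψ : ℕ → ℂ) : ℕ → ℂ
  | 0 => 1
  | n + 1 => psiFact ψ n * ψ (n + 1)

/-- The ψ-binomial coefficient binomψ(n,k) = ψₙ!/(ψₖ!·ψ_{n−k}!). -/
noncomputable def psiBinom (ψ : ℕ → ℂ) (n k : ℕ) : ℂ :=
  psiFact ψ n / (psiFact ψ k * psiFact ψ (n - k))

/-- The Fontané numbers F(n,k) = (ψₙ − ψₖ)/ψ_{n−k}. -/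
noncomputable def Fker (ψ : ℕ → ℂ) (n k : ℕ) : ℂ :=
  (ψ n - ψ k) / ψ (n - k)

/-- The q-integers [n] = (qⁿ − 1)/(q − 1). -/
noncomputable def qInt (q : ℂ) (n : ℕ) : ℂ := (q ^ n - 1) / (q - 1)

/-- The Fontané product ∗_{i,j} of coefficient sequences. -/
noncomputable def fontane (ψ : ℕ → ℂ) (i j : ℕ) (a b : ℕ → ℂ) (n : ℕ) : ℂ :=
  ∑ k ∈ Finset.range (n + 1), Fker ψ (n + i) (k + j) * psiBinom ψ n k * a k * b (n - k)

lemma Fker_q (q : ℂ) (hq : ∀ n : ℕ, 1 ≤ n → q ^ n ≠ 1) {n k : ℕ} (h : k < n) :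
    Fker (qInt q) n k = q ^ k := by
  have h1 : q - 1 ≠ 0 := sub_ne_zero.mpr (by simpa using hq 1 le_rfl)
  have hm : 1 ≤ n - k := Nat.le_sub_of_add_le (by omega)
  have hne : q ^ (n - k) - 1 ≠ 0 := sub_ne_zero.mpr (hq _ hm)
  have hnk : k + (n - k) = n := Nat.add_sub_cancel' h.le
  have hψ : qInt q (n - k) ≠ 0 := div_ne_zero hne h1
  rw [Fker, div_eq_iff hψ, qInt, qInt, qInt]
  field_simp
  rw [show n = k + (n-k) from hnk.symm]
  simp [pow_add]
  ring

/-- In the q-case the Fontané product ∗_{i,j} is q^j f(qx)g(x) (independently of i),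
and it is neither commutative nor associative. -/
theorem qInt_fontane (q : ℂ) (hq0 : q ≠ 0) (hq : ∀ n : ℕ, 1 ≤ n → q ^ n ≠ 1)
    (i j : ℕ) (hij : j < i) :
    (∀ a b : ℕ → ℂ, ∀ n : ℕ,
      fontane (qInt q) i j a b n
        = q ^ j * ∑ k ∈ Finset.range (n + 1),
            q ^ k * psiBinom (qInt q) n k * a k * b (n - k)) ∧
    (∃ a b : ℕ → ℂ, fontane (qInt q) i j a b ≠ fontane (qInt q) i j b a) ∧
    (∃ a b c : ℕ → ℂ,
      fontane (qInt q) i j (fontane (qInt q) i j a b) c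
        ≠ fontane (qInt q) i j a (fontane (qInt q) i j b c)) := by
  have h1 : q - 1 ≠ 0 := sub_ne_zero.mpr (by simpa using hq 1 le_rfl)
  have hq1 : q ≠ 1 := by simpa using hq 1 le_rfl
  have hψ1 : qInt q 1 = 1 := by
    simp only [qInt, pow_one]
    exact div_self h1
  have key : ∀ a b : ℕ → ℂ, ∀ n : ℕ,
      fontane (qInt q) i j a b n
        = q ^ j * ∑ k ∈ Finset.range (n + 1),
            q ^ k * psiBinom (qInt q) n k * a k * b (n - k) := by
    intro a b n
    rw [fontane, Finset.mul_sum]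
    refine Finset.sum_congr rfl fun k hk => ?_
    have hk' : k ≤ n := Nat.lt_succ_iff.mp (Finset.mem_range.mp hk)
    rw [Fker_q q hq (by omega : k + j < n + i), pow_add]
    ring
  refine ⟨key, ?_, ?_⟩
  · -- noncommutativity
    set a : ℕ → ℂ := fun n => if n = 1 then 1 else 0 with ha
    set b : ℕ → ℂ := fun n => if n = 0 then 1 else 0 with hb
    refine ⟨a, b, fun hcon => ?_⟩
    have h := congrFun hcon 1
    rw [key, key] at h
    simp [Finset.sum_range_succ, ha, hb, psiBinom, psiFact, hψ1] at h
    exact hq1 (mul_left_cancel₀ (pow_ne_zero j hq0) (by rw [h, mul_one]))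
  · -- nonassociativity
    set a : ℕ → ℂ := fun n => if n = 1 then 1 else 0 with ha
    set b : ℕ → ℂ := fun n => if n = 0 then 1 else 0 with hb
    refine ⟨a, b, b, fun hcon => ?_⟩
    have h := congrFun hcon 1
    simp only [key] at h
    simp [Finset.sum_range_succ, ha, hb, psiBinom, psiFact, hψ1, hq0] at h
    exact hq1 h
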